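/- Let ε be a minimum-weight feedback arc set of a positively arc-weighted digraph (G,ω) and let e ∈ E. Then ε contains at most one arc from the Γ-equivalence class of e (arcs lying on a common branch-point-free directed path through e), and if ε meets this class, the chosen arc minimizes ω on the class. -/

import Mathlib

/-- A directed cycle of a digraph given by `tail`/`head` maps. -/
def IsCycle {V E : Type*} (tail head : E → V) {n : ℕ} (c : Fin (n + 1) → E) : Prop :=
  ∀ i, head (c i) = tail (c (i + 1))

/-- `ε` is a feedback arc set: removing its arcs leaves no directed cycle. -/
def IsFAS {V E : Type*} (tail head : E → V) (ε : Set E) : Prop :=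
  ¬ ∃ (n : ℕ) (c : Fin (n + 1) → E), IsCycle tail head c ∧ ∀ i, c i ∉ ε

/-- `ε` is a minimum-weight feedback arc set. -/
def IsOptFAS {V E : Type*} (tail head : E → V) (ω : E → ℝ) (ε : Finset E) : Prop :=
  IsFAS tail head ↑ε ∧
    ∀ ε' : Finset E, IsFAS tail head ↑ε' → ∑ x ∈ ε, ω x ≤ ∑ x ∈ ε', ω x

/-- Γ-equivalence: `e = f`, or `e` and `f` are the first and last arcs of a directed
path all of whose internal vertices have indegree 1 and outdegree 1. -/
def GammaEquiv {V E : Type*} (tail head : E → V) (e f : E) : Prop :=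
  e = f ∨ ∃ (m : ℕ) (p : Fin (m + 1) → E),
    (∀ i : Fin m, head (p i.castSucc) = tail (p i.succ)) ∧
    ((p 0 = e ∧ p (Fin.last m) = f) ∨ (p 0 = f ∧ p (Fin.last m) = e)) ∧
    (∀ i : Fin m,
      Nat.card {g : E // head g = head (p i.castSucc)} = 1 ∧
      Nat.card {g : E // tail g = head (p i.castSucc)} = 1)


lemma card_one_unique {α : Type*} {P : α → Prop} (h : Nat.card {x // P x} = 1)
    {a b : α} (ha : P a) (hb : P b) : a = b := by
  haveI := (Nat.card_eq_one_iff_unique.mp h).1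
  exact congrArg Subtype.val (Subsingleton.elim (⟨a, ha⟩ : {x // P x}) ⟨b, hb⟩)

lemma gamma_cycle_iff {V E : Type*} (tail head : E → V) {e f : E}
    (h : GammaEquiv tail head e f) {n : ℕ} {c : Fin (n + 1) → E}
    (hc : IsCycle tail head c) : (∃ i, c i = e) ↔ (∃ i, c i = f) := by
  rcases h with rfl | ⟨m, p, hpath, hends, hdeg⟩
  · rfl
  have stepF : ∀ k : Fin m, (∃ i, c i = p k.castSucc) → ∃ i, c i = p k.succ := by
    rintro k ⟨i, hi⟩
    refine ⟨i + 1, ?_⟩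
    have h1 : tail (c (i + 1)) = head (p k.castSucc) := by rw [← hc i, hi]
    have h2 : tail (p k.succ) = head (p k.castSucc) := (hpath k).symm
    exact card_one_unique (hdeg k).2 h1 h2
  have stepB : ∀ k : Fin m, (∃ i, c i = p k.succ) → ∃ i, c i = p k.castSucc := by
    rintro k ⟨i, hi⟩
    refine ⟨i - 1, ?_⟩
    have hio : (i - 1) + 1 = i := sub_add_cancel i 1
    have h1 : head (c (i - 1)) = head (p k.castSucc) := by
      rw [hc (i - 1), hio, hi, ← hpath k]
    exact card_one_unique (hdeg k).1 h1 rfl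
  have fwd : (∃ i, c i = p 0) → ∃ i, c i = p (Fin.last m) := by
    intro h0
    have key : ∀ k : ℕ, (hk : k ≤ m) → ∃ i, c i = p ⟨k, Nat.lt_succ_of_le hk⟩ := by
      intro k
      induction k with
      | zero => intro _; exact h0
      | succ k ih =>
        intro hk
        have hk' : k < m := Nat.lt_of_succ_le hk
        obtain ⟨i, hi⟩ := stepF ⟨k, hk'⟩ (ih (le_of_lt hk'))
        exact ⟨i, hi⟩
    exact key m le_rfl
  have bwd : (∃ i, c i = p (Fin.last m)) → ∃ i, c i = p 0 := by
    intro h0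
    have key : ∀ k : ℕ, (hk : k ≤ m) → ∃ i, c i = p ⟨m - k, by omega⟩ := by
      intro k
      induction k with
      | zero => intro _; simpa [Fin.last] using h0
      | succ k ih =>
        intro hk
        have hk' : k ≤ m := le_of_lt (Nat.lt_of_succ_le hk)
        obtain ⟨i, hi⟩ := ih hk'
        have hlt : m - (k + 1) < m := by omega
        have hsucc : (⟨m - (k + 1), hlt⟩ : Fin m).succ = ⟨m - k, by omega⟩ := by
          apply Fin.ext; simp; omega
        obtain ⟨j, hj⟩ := stepB ⟨m - (k + 1), hlt⟩ ⟨i, by rw [hi, ← hsucc]⟩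
        exact ⟨j, hj⟩
    have := key m le_rfl
    simpa using this
  rcases hends with ⟨he, hf⟩ | ⟨hf, he⟩
  · rw [← he, ← hf]; exact ⟨fwd, bwd⟩
  · rw [← he, ← hf]; exact ⟨bwd, fwd⟩

/-- A minimum-weight feedback arc set of a positively weighted digraph contains at most
one arc from the Γ-equivalence class of any arc `e`, and an arc it contains from that
class minimizes the weight on the class. -/
theorem optFAS_gamma_class {V E : Type*} [Fintype V] [Fintype E]
    (tail head : E → V) (ω : E → ℝ) (hω : ∀ e, 0 < ω e)
    (ε : Finset E) (hopt : IsOptFAS tail head ω ε) (e : E) :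
    (∀ f ∈ ε, ∀ g ∈ ε, GammaEquiv tail head e f → GammaEquiv tail head e g → f = g) ∧
    (∀ f ∈ ε, GammaEquiv tail head e f →
      ∀ g, GammaEquiv tail head e g → ω f ≤ ω g) := by
  classical
  obtain ⟨hfas, hmin⟩ := hopt
  constructor
  · intro f hf g hg hef heg
    by_contra hne
    -- removing f still gives a FAS, contradicting minimality
    have hfas' : IsFAS tail head ↑(ε.erase f) := by
      rintro ⟨n, c, hc, hav⟩
      refine hfas ⟨n, c, hc, fun i hi => ?_⟩
      by_cases hif : c i = f
      · obtain ⟨j, hj⟩ := (gamma_cycle_iff tail head heg hc).mp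
          ((gamma_cycle_iff tail head hef hc).mpr ⟨i, hif⟩)
        exact hav j (by simp [hj, Finset.mem_erase, Ne.symm hne, hg])
      · exact hav i (by simp [Finset.mem_erase, hif, hi])
    have hle := hmin _ hfas'
    have heq : ∑ x ∈ ε.erase f, ω x + ω f = ∑ x ∈ ε, ω x := Finset.sum_erase_add ε ω hf
    have := hω f
    linarith
  · intro f hf hef g heg
    by_contra hlt
    push_neg at hlt
    -- swap f for g: still a FAS, strictly smaller weight
    have hfas' : IsFAS tail head ↑(insert g (ε.erase f)) := by
      rintro ⟨n, c, hc, hav⟩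
      refine hfas ⟨n, c, hc, fun i hi => ?_⟩
      by_cases hif : c i = f
      · obtain ⟨j, hj⟩ := (gamma_cycle_iff tail head heg hc).mp
          ((gamma_cycle_iff tail head hef hc).mpr ⟨i, hif⟩)
        exact hav j (by simp [hj])
      · exact hav i (by simp [Finset.mem_erase, hif, hi])
    have hle := hmin _ hfas'
    have heq : ∑ x ∈ ε.erase f, ω x + ω f = ∑ x ∈ ε, ω x := Finset.sum_erase_add ε ω hf
    have hins : ∑ x ∈ insert g (ε.erase f), ω x ≤ ω g + ∑ x ∈ ε.erase f, ω x := by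
      by_cases hgmem : g ∈ ε.erase f
      · rw [Finset.insert_eq_self.mpr hgmem]
        have := hω g
        linarith
      · rw [Finset.sum_insert hgmem]
    linarith
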